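/- Let K ⊆ L be an extension of complete discrete valuation rings (O_K ⊆ O_L) where K has characteristic 0, the residue characteristic is p > 0, L/K is Galois of degree p, and the ramification index e(L/K) = 1 (so the residue field extension has degree p). Then the degree δ of the different of O_L/O_K satisfies 0 ≤ δ ≤ v_K(p), where v_K is the normalized valuation of K. -/

import Mathlib

/-- **Bounds on the different (cf. Proposition 1.3.2).**  Let `O_K ⊆ O_L` be an
extension of complete discrete valuation rings with `char K = 0` and residue
characteristic `p > 0`, such that `L/K` is Galois of degree `p` and the ramification
index is `1` (a uniformizer of `O_K` stays a uniformizer of `O_L`).  Then the degree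
`δ` of the different of `O_L/O_K` satisfies `0 ≤ δ ≤ v_K(p)`: the different ideal is
`m_L^δ` for some `δ` with `p ∈ m_L^δ`. -/
theorem statement16 (p : ℕ) (hp : p.Prime)
    (A : Type*) [CommRing A] [IsDomain A] [IsDiscreteValuationRing A] [CharZero A]
    [IsAdicComplete (IsLocalRing.maximalIdeal A) A]
    (B : Type*) [CommRing B] [IsDomain B] [IsDiscreteValuationRing B]
    [IsAdicComplete (IsLocalRing.maximalIdeal B) B]
    [Algebra A B] [Module.Finite A B] [NoZeroSMulDivisors A B]
    (hres : CharP (IsLocalRing.ResidueField A) p)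
    -- ramification index `1`
    (hunram : Ideal.map (algebraMap A B) (IsLocalRing.maximalIdeal A)
        = IsLocalRing.maximalIdeal B)
    [Algebra (FractionRing A) (FractionRing B)]
    [IsScalarTower A (FractionRing A) (FractionRing B)]
    [IsScalarTower A B (FractionRing B)]
    -- `L/K` is Galois of degree `p`
    [IsGalois (FractionRing A) (FractionRing B)]
    (hdeg : Module.finrank (FractionRing A) (FractionRing B) = p) :
    ∃ δ : ℕ, differentIdeal A B = IsLocalRing.maximalIdeal B ^ δ ∧
      (p : B) ∈ IsLocalRing.maximalIdeal B ^ δ := by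
  classical
  set K := FractionRing A
  set L := FractionRing B
  obtain ⟨ϖ, hϖ⟩ := IsDiscreteValuationRing.exists_irreducible A
  have hmA : IsLocalRing.maximalIdeal A = Ideal.span {ϖ} :=
    (IsDiscreteValuationRing.irreducible_iff_uniformizer ϖ).mp hϖ
  have hmB : IsLocalRing.maximalIdeal B = Ideal.span {algebraMap A B ϖ} := by
    rw [← hunram, hmA, Ideal.map_span]
    simp
  have hϖB : Irreducible (algebraMap A B ϖ) :=
    (IsDiscreteValuationRing.irreducible_iff_uniformizer _).mpr hmB
  have hABinj : Function.Injective (algebraMap A B) :=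
    FaithfulSMul.algebraMap_injective A B
  have hBLinj : Function.Injective (algebraMap B L) := IsFractionRing.injective B L
  have hAKinj : Function.Injective (algebraMap A K) := IsFractionRing.injective A K
  have hϖL0 : algebraMap B L (algebraMap A B ϖ) ≠ 0 := fun h =>
    hϖB.ne_zero (hBLinj (by simpa using h))
  haveI : FiniteDimensional K L := FiniteDimensional.of_finrank_pos (by rw [hdeg]; exact hp.pos)
  -- the key membership: `p` lies in the different ideal
  have hmem1 : algebraMap B L (p : B) ∈ (1 / Submodule.traceDual A K 1 : Submodule B L) := by
    rw [Submodule.mem_div_iff_forall_mul_mem]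
    intro y hy
    rw [Submodule.mem_traceDual] at hy
    rcases eq_or_ne y 0 with rfl | hy0
    · simp
    obtain ⟨⟨b, s⟩, hbs⟩ := IsLocalization.surj (nonZeroDivisors B) y
    simp only at hbs
    have hs0 : (s : B) ≠ 0 := nonZeroDivisors.ne_zero s.2
    obtain ⟨k, u, hs⟩ := IsDiscreteValuationRing.eq_unit_mul_pow_irreducible hs0 hϖB
    have hb0 : b ≠ 0 := by
      rintro rfl
      refine hy0 ?_
      have hsL : algebraMap B L (s : B) ≠ 0 := fun h => hs0 (hBLinj (by simpa using h))
      rw [map_zero] at hbs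
      exact (mul_eq_zero.mp hbs).resolve_right hsL
    have hb'0 : b * ↑u⁻¹ ≠ 0 := mul_ne_zero hb0 u⁻¹.ne_zero
    obtain ⟨n, w, hbw⟩ := IsDiscreteValuationRing.eq_unit_mul_pow_irreducible hb'0 hϖB
    -- key equation: y * ϖ^k = w * ϖ^n in L
    have h2 : y * (algebraMap B L ↑u * algebraMap B L (algebraMap A B ϖ) ^ k)
        = algebraMap B L b := by
      have h1 : y * algebraMap B L (↑u * algebraMap A B ϖ ^ k) = algebraMap B L b := by
        rw [← hs]; exact hbs
      simpa [map_mul, map_pow] using h1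
    have hu : algebraMap B L ↑u * algebraMap B L (↑u⁻¹ : Bˣ) = 1 := by
      rw [← map_mul]; simp
    have h3 : algebraMap B L b * algebraMap B L (↑u⁻¹ : Bˣ)
        = algebraMap B L ↑w * (algebraMap B L (algebraMap A B ϖ)) ^ n := by
      rw [← map_mul, hbw, map_mul, map_pow]
    have hE : y * (algebraMap B L (algebraMap A B ϖ)) ^ k
        = algebraMap B L (↑w) * (algebraMap B L (algebraMap A B ϖ)) ^ n := by
      linear_combination (algebraMap B L (↑u⁻¹ : Bˣ)) * h2 + h3
        - y * (algebraMap B L (algebraMap A B ϖ)) ^ k * hu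
    have hw : algebraMap B L ↑w * algebraMap B L (↑w⁻¹ : Bˣ) = 1 := by
      rw [← map_mul]; simp
    -- trace computation
    have ht := hy (algebraMap B L (↑w⁻¹ : Bˣ)) (Submodule.mem_one.mpr ⟨_, rfl⟩)
    obtain ⟨a, ha⟩ := ht
    rw [Algebra.traceForm_apply] at ha
    have e1 : algebraMap K L (algebraMap A K (ϖ ^ k)) * (y * algebraMap B L (↑w⁻¹ : Bˣ))
        = algebraMap K L (algebraMap A K (ϖ ^ n)) := by
      rw [← IsScalarTower.algebraMap_apply A K L, IsScalarTower.algebraMap_apply A B L,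
        ← IsScalarTower.algebraMap_apply A K L (ϖ ^ n),
        IsScalarTower.algebraMap_apply A B L (ϖ ^ n)]
      simp only [map_pow]
      linear_combination (algebraMap B L (↑w⁻¹ : Bˣ)) * hE
        + (algebraMap B L (algebraMap A B ϖ)) ^ n * hw
    have e2 : Algebra.trace K L (y * algebraMap B L (↑w⁻¹ : Bˣ)) * algebraMap A K (ϖ ^ k)
        = (p : K) * algebraMap A K (ϖ ^ n) := by
      have h4 := (Algebra.trace K L).map_smul (algebraMap A K (ϖ ^ k))
        (y * algebraMap B L (↑w⁻¹ : Bˣ))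
      rw [Algebra.smul_def, e1, Algebra.trace_algebraMap, hdeg, smul_eq_mul] at h4
      rw [mul_comm, ← h4, nsmul_eq_mul]
    have hK : a * ϖ ^ k = (p : A) * ϖ ^ n := by
      apply hAKinj
      rw [map_mul, map_mul, ha, map_natCast]
      exact e2
    have hA2 : (p : B) * ↑w * algebraMap A B ϖ ^ n
        = algebraMap A B a * ↑w * algebraMap A B ϖ ^ k := by
      have h5 := congrArg (algebraMap A B) hK
      rw [map_mul, map_mul, map_pow, map_pow, map_natCast] at h5
      linear_combination (-(↑w : B)) * h5
    have hfinal : algebraMap B L (p : B) * y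
        = algebraMap B L (algebraMap A B a * ↑w) := by
      apply mul_right_cancel₀ (pow_ne_zero k hϖL0)
      calc algebraMap B L (p : B) * y * (algebraMap B L (algebraMap A B ϖ)) ^ k
          = algebraMap B L (p : B) * (y * (algebraMap B L (algebraMap A B ϖ)) ^ k) := by ring
        _ = algebraMap B L ((p : B) * ↑w * algebraMap A B ϖ ^ n) := by
            rw [hE, map_mul, map_mul, map_pow]; ring
        _ = algebraMap B L (algebraMap A B a * ↑w * algebraMap A B ϖ ^ k) := by rw [hA2]
        _ = algebraMap B L (algebraMap A B a * ↑w)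
            * (algebraMap B L (algebraMap A B ϖ)) ^ k := by
            rw [map_mul, map_pow]
    rw [hfinal]
    exact Submodule.mem_one.mpr ⟨_, rfl⟩
  have hpmem : (p : B) ∈ differentIdeal A B := by
    rw [← coeSubmodule_differentIdeal A K (B := B) (L := L),
      IsLocalization.mem_coeSubmodule] at hmem1
    obtain ⟨x, hx, he⟩ := hmem1
    rwa [hBLinj he] at hx
  -- conclude
  have hp0B : (p : B) ≠ 0 := by
    intro h
    have hA0 : (p : A) ≠ 0 := Nat.cast_ne_zero.mpr hp.ne_zero
    apply hA0
    apply hABinj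
    rw [map_natCast, map_zero, h]
  have hne : differentIdeal A B ≠ ⊥ := by
    intro h
    rw [h, Ideal.mem_bot] at hpmem
    exact hp0B hpmem
  obtain ⟨δ, hδ⟩ := IsDiscreteValuationRing.ideal_eq_span_pow_irreducible hne hϖB
  refine ⟨δ, ?_, ?_⟩
  · rw [hδ, hmB, Ideal.span_singleton_pow]
  · rw [hmB, Ideal.span_singleton_pow, ← hδ]
    exact hpmem
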